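/- Let α > 0, c > 0, x ∈ (0,π) and p ≥ 1 an integer. Then the symmetric tail series ∑_{|n| ≥ p} e^{i n x}/(c + |n|^α) (defined as the limit as q → ∞ of the finite sums over p ≤ |n| ≤ q) converges, and its modulus satisfies | ∑_{|n| ≥ p} e^{i n x}/(c + |n|^α) | ≤ 2 / ( sin(x/2) · (c + p^α) ). -/

import Mathlib

open Filter Set

private lemma tele_sum (F : ℕ → ℝ) (j k : ℕ) (hjk : j ≤ k) :
    ∑ m ∈ Finset.Ico j k, (F (m + 1) - F m) = F k - F j := by
  induction k, hjk using Nat.le_induction with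
  | base => simp
  | succ k hk ih => rw [Finset.sum_Ico_succ_top hk, ih]; ring

private lemma dirichlet_bound (x : ℝ) (hs : 0 < Real.sin (x / 2)) (j n : ℕ) :
    |∑ m ∈ Finset.Icc j n, Real.cos (m * x)| ≤ 1 / Real.sin (x / 2) := by
  rcases lt_or_ge n j with h | h
  · rw [Finset.Icc_eq_empty (by omega)]
    simp only [Finset.sum_empty, abs_zero]
    positivity
  · set F : ℕ → ℝ := fun m => Real.sin (((m : ℝ) - 1 / 2) * x) with hF
    have key : ∀ m : ℕ, F (m + 1) - F m = 2 * Real.sin (x / 2) * Real.cos (m * x) := by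
      intro m
      rw [hF]
      simp only [Real.sin_sub_sin]
      push_cast
      ring_nf
    have htel : ∑ m ∈ Finset.Icc j n, (2 * Real.sin (x / 2) * Real.cos (m * x))
        = F (n + 1) - F j := by
      rw [← Finset.Ico_add_one_right_eq_Icc]
      rw [← tele_sum F j (n + 1) (by omega)]
      exact Finset.sum_congr rfl fun m _ => (key m).symm
    have h2 : 2 * Real.sin (x / 2) * ∑ m ∈ Finset.Icc j n, Real.cos (m * x)
        = F (n + 1) - F j := by
      rw [← htel, Finset.mul_sum]
    have hFb : |F (n + 1) - F j| ≤ 2 := by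
      calc |F (n + 1) - F j| ≤ |F (n+1)| + |F j| := abs_sub _ _
        _ ≤ 1 + 1 := add_le_add (Real.abs_sin_le_one _) (Real.abs_sin_le_one _)
        _ = 2 := by norm_num
    have := h2 ▸ hFb
    rw [abs_mul, abs_of_pos (by positivity : (0:ℝ) < 2 * Real.sin (x/2))] at this
    rw [le_div_iff₀ hs]
    nlinarith [abs_nonneg (∑ m ∈ Finset.Icc j n, Real.cos (m * x))]



private lemma tele_sum' (F : ℕ → ℝ) (j k : ℕ) (hjk : j ≤ k) :
    ∑ m ∈ Finset.Ico j k, (F m - F (m + 1)) = F j - F k := by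
  induction k, hjk using Nat.le_induction with
  | base => simp
  | succ k hk ih => rw [Finset.sum_Ico_succ_top hk, ih]; ring

private lemma abel_formula (a b : ℕ → ℝ) (j k : ℕ) (hjk : j ≤ k) :
    ∑ n ∈ Finset.Icc j k, a n * b n
      = (∑ m ∈ Finset.Icc j k, a m) * b k
        + ∑ n ∈ Finset.Ico j k, (∑ m ∈ Finset.Icc j n, a m) * (b n - b (n + 1)) := by
  induction k, hjk using Nat.le_induction with
  | base => simp
  | succ k hk ih =>
    rw [Finset.sum_Icc_succ_top (by omega), Finset.sum_Icc_succ_top (by omega),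
      Finset.sum_Ico_succ_top hk, ih]
    ring

private lemma abel_bound (a b : ℕ → ℝ) (M : ℝ) (hM : 0 ≤ M)
    (hb : ∀ n, 0 ≤ b n) (hmono : ∀ n, b (n + 1) ≤ b n)
    (hDM : ∀ j n : ℕ, |∑ m ∈ Finset.Icc j n, a m| ≤ M) (j k : ℕ) :
    |∑ n ∈ Finset.Icc j k, a n * b n| ≤ M * b j := by
  rcases lt_or_ge k j with h | h
  · rw [Finset.Icc_eq_empty (by omega)]
    simp only [Finset.sum_empty, abs_zero]
    exact mul_nonneg hM (hb j)
  · rw [abel_formula a b j k h]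
    calc |(∑ m ∈ Finset.Icc j k, a m) * b k
        + ∑ n ∈ Finset.Ico j k, (∑ m ∈ Finset.Icc j n, a m) * (b n - b (n + 1))|
        ≤ |(∑ m ∈ Finset.Icc j k, a m) * b k|
          + |∑ n ∈ Finset.Ico j k, (∑ m ∈ Finset.Icc j n, a m) * (b n - b (n + 1))| :=
        abs_add_le _ _
      _ ≤ M * b k + ∑ n ∈ Finset.Ico j k, M * (b n - b (n + 1)) := by
        gcongr
        · rw [abs_mul, abs_of_nonneg (hb k)]
          exact mul_le_mul_of_nonneg_right (hDM j k) (hb k)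
        · refine (Finset.abs_sum_le_sum_abs _ _).trans (Finset.sum_le_sum fun n _ => ?_)
          rw [abs_mul, abs_of_nonneg (sub_nonneg.mpr (hmono n))]
          exact mul_le_mul_of_nonneg_right (hDM j n) (sub_nonneg.mpr (hmono n))
      _ = M * b k + M * (b j - b k) := by
        rw [← Finset.mul_sum, tele_sum' b j k h]
      _ = M * b j := by ring



private lemma split_sum (α c x : ℝ) (p q : ℕ) (hp : 1 ≤ p) :
    ∑ n ∈ (Finset.Icc (-(q : ℤ)) (q : ℤ)).filter (fun n => p ≤ n.natAbs),
        Complex.exp (Complex.I * (n : ℂ) * (x : ℂ)) / ((c : ℂ) + ((n.natAbs : ℝ) ^ α : ℝ))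
      = ((∑ n ∈ Finset.Icc p q, (2 * Real.cos (n * x)) * (c + (n : ℝ) ^ α)⁻¹ : ℝ) : ℂ) := by
  have e1 : Function.Injective (fun n : ℕ => (n : ℤ)) := fun a b h => by simpa using h
  have e2 : Function.Injective (fun n : ℕ => -(n : ℤ)) := fun a b h => by
    simp only [neg_inj] at h; exact_mod_cast h
  have hsplit : (Finset.Icc (-(q : ℤ)) (q : ℤ)).filter (fun n => p ≤ n.natAbs)
      = ((Finset.Icc p q).map ⟨fun n : ℕ => (n : ℤ), e1⟩)
        ∪ ((Finset.Icc p q).map ⟨fun n : ℕ => -(n : ℤ), e2⟩) := by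
    ext n
    simp only [Finset.mem_filter, Finset.mem_Icc, Finset.mem_union, Finset.mem_map,
      Function.Embedding.coeFn_mk]
    constructor
    · rintro ⟨⟨h1, h2⟩, h3⟩
      rcases le_or_gt 0 n with hn | hn
      · exact Or.inl ⟨n.natAbs, ⟨by omega, by omega⟩, by omega⟩
      · exact Or.inr ⟨n.natAbs, ⟨by omega, by omega⟩, by omega⟩
    · rintro (⟨a, ⟨ha1, ha2⟩, rfl⟩ | ⟨a, ⟨ha1, ha2⟩, rfl⟩) <;> refine ⟨⟨by omega, by omega⟩, by omega⟩
  have hdisj : Disjoint ((Finset.Icc p q).map ⟨fun n : ℕ => (n : ℤ), e1⟩)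
      ((Finset.Icc p q).map ⟨fun n : ℕ => -(n : ℤ), e2⟩) := by
    rw [Finset.disjoint_left]
    rintro n hn hn'
    simp only [Finset.mem_map, Finset.mem_Icc, Function.Embedding.coeFn_mk] at hn hn'
    obtain ⟨a, ⟨ha1, _⟩, rfl⟩ := hn
    obtain ⟨b, ⟨hb1, _⟩, hb⟩ := hn'
    omega
  rw [hsplit, Finset.sum_union hdisj, Finset.sum_map, Finset.sum_map]
  rw [← Finset.sum_add_distrib]
  rw [Complex.ofReal_sum]
  refine Finset.sum_congr rfl fun n hn => ?_
  simp only [Function.Embedding.coeFn_mk, Int.natAbs_neg, Int.natAbs_cast, Int.cast_natCast, Int.cast_neg]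
  have h2 : Complex.exp (Complex.I * (n : ℂ) * (x : ℂ)) + Complex.exp (Complex.I * (-(n : ℂ)) * (x : ℂ))
      = 2 * Complex.cos ((n : ℂ) * (x : ℂ)) := by
    simp only [Complex.cos]
    rw [show Complex.I * (n : ℂ) * (x : ℂ) = ((n : ℂ) * (x : ℂ)) * Complex.I by ring,
      show Complex.I * (-(n : ℂ)) * (x : ℂ) = -((n : ℂ) * (x : ℂ)) * Complex.I by ring]
    ring
  push_cast
  rw [← add_div, h2, div_eq_mul_inv]


theorem tail_series_bound (α c : ℝ) (hα : 0 < α) (hc : 0 < c)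
    (x : ℝ) (hx : x ∈ Set.Ioo (0 : ℝ) Real.pi) (p : ℕ) (hp : 1 ≤ p) :
    ∃ L : ℂ,
      Tendsto (fun q : ℕ =>
          ∑ n ∈ (Finset.Icc (-(q : ℤ)) (q : ℤ)).filter (fun n => p ≤ n.natAbs),
            Complex.exp (Complex.I * (n : ℂ) * (x : ℂ)) / ((c : ℂ) + ((n.natAbs : ℝ) ^ α : ℝ)))
        atTop (nhds L) ∧
      ‖L‖ ≤ 2 / (Real.sin (x / 2) * (c + (p : ℝ) ^ α)) := by
  obtain ⟨hx0, hxπ⟩ := hx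
  have hs : 0 < Real.sin (x / 2) :=
    Real.sin_pos_of_pos_of_lt_pi (by linarith) (by linarith [Real.pi_pos])
  set s := Real.sin (x / 2) with hsdef
  set a : ℕ → ℝ := fun n => 2 * Real.cos (n * x) with ha
  set b : ℕ → ℝ := fun n => (c + (n : ℝ) ^ α)⁻¹ with hb
  have hbpos : ∀ n, 0 < b n := fun n => by
    have : (0:ℝ) ≤ (n : ℝ) ^ α := Real.rpow_nonneg (Nat.cast_nonneg n) α
    positivity
  have hbmono : ∀ i j, i ≤ j → b j ≤ b i := by
    intro i j hij
    apply inv_anti₀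
    · have : (0:ℝ) ≤ (i : ℝ) ^ α := Real.rpow_nonneg (Nat.cast_nonneg i) α
      positivity
    · have := Real.rpow_le_rpow (Nat.cast_nonneg i) (Nat.cast_le.mpr hij) hα.le
      linarith
  set M : ℝ := 2 / s with hM
  have hMpos : 0 < M := by positivity
  have hDM : ∀ j n : ℕ, |∑ m ∈ Finset.Icc j n, a m| ≤ M := by
    intro j n
    have := dirichlet_bound x hs j n
    rw [ha]
    rw [← Finset.mul_sum, abs_mul, abs_of_nonneg (by norm_num : (0:ℝ) ≤ 2)]
    rw [hM]
    calc 2 * |∑ m ∈ Finset.Icc j n, Real.cos (m * x)| ≤ 2 * (1 / s) := by linarith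
      _ = 2 / s := by ring
  have habel : ∀ j k : ℕ, |∑ n ∈ Finset.Icc j k, a n * b n| ≤ M * b j :=
    abel_bound a b M hMpos.le (fun n => (hbpos n).le) (fun n => hbmono n (n+1) (by omega)) hDM
  set g : ℕ → ℝ := fun q => ∑ n ∈ Finset.Icc p q, a n * b n with hg
  -- Cauchy
  have hcauchy : CauchySeq g := by
    apply cauchySeq_of_le_tendsto_0 (fun N => M * b N)
    · intro m n N hm hn
      wlog hmn : m ≤ n generalizing m n
      · rw [dist_comm]; exact this n m hn hm (by omega)
      rw [Real.dist_eq]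
      have hsub : g m - g n = -(∑ k ∈ Finset.Icc (max p (m+1)) n, a k * b k) := by
        simp only [hg]
        rcases le_or_gt p m with hpm | hpm
        · have hsubset : Finset.Icc p m ⊆ Finset.Icc p n := Finset.Icc_subset_Icc le_rfl hmn
          have hset : Finset.Icc p n \ Finset.Icc p m = Finset.Icc (max p (m+1)) n := by
            ext k; simp only [Finset.mem_sdiff, Finset.mem_Icc]; omega
          have hd : ∑ k ∈ Finset.Icc (max p (m+1)) n, a k * b k
              = ∑ k ∈ Finset.Icc p n, a k * b k - ∑ k ∈ Finset.Icc p m, a k * b k := by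
            rw [← hset, Finset.sum_sdiff_eq_sub hsubset]
          rw [hd]; ring
        · have h1 : Finset.Icc p m = ∅ := Finset.Icc_eq_empty (by omega)
          have h2 : max p (m+1) = p := by omega
          rw [h1, h2]; simp
      rw [hsub, abs_neg]
      calc |∑ k ∈ Finset.Icc (max p (m+1)) n, a k * b k| ≤ M * b (max p (m+1)) :=
          habel _ _
        _ ≤ M * b N := by
          have := hbmono N (max p (m+1)) (by omega)
          nlinarith
    · have h1 : Tendsto (fun N : ℕ => c + (N:ℝ)^α) atTop atTop := by
        apply tendsto_atTop_add_const_left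
        exact (tendsto_rpow_atTop hα).comp tendsto_natCast_atTop_atTop
      have h2 : Tendsto b atTop (nhds 0) := h1.inv_tendsto_atTop
      have := h2.const_mul M
      simpa using this
  obtain ⟨L', hL'⟩ := cauchySeq_tendsto_of_complete hcauchy
  refine ⟨(L' : ℂ), ?_, ?_⟩
  · have : (fun q : ℕ =>
        ∑ n ∈ (Finset.Icc (-(q : ℤ)) (q : ℤ)).filter (fun n => p ≤ n.natAbs),
          Complex.exp (Complex.I * (n : ℂ) * (x : ℂ)) / ((c : ℂ) + ((n.natAbs : ℝ) ^ α : ℝ)))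
        = fun q => ((g q : ℝ) : ℂ) := by
      funext q
      exact split_sum α c x p q hp
    rw [this]
    exact (Complex.continuous_ofReal.tendsto L').comp hL'
  · rw [Complex.norm_real]
    have hbound : ∀ q, |g q| ≤ M * b p := fun q => habel p q
    have habs : Tendsto (fun q => |g q|) atTop (nhds |L'|) := hL'.abs
    have : |L'| ≤ M * b p := le_of_tendsto' habs hbound
    calc |L'| ≤ M * b p := this
      _ = 2 / (s * (c + (p:ℝ)^α)) := by
        rw [hM, hb]
        have h1 : (0:ℝ) < c + (p:ℝ)^α := by
          have : (0:ℝ) ≤ (p : ℝ) ^ α := Real.rpow_nonneg (Nat.cast_nonneg p) α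
          positivity
        field_simp
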